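/- No omnitig contains a bivalent node twice as an internal node. -/

import Mathlib

/-- A directed multigraph: arcs `E` with tail and head maps into nodes `V`. -/
structure MultiDigraph (V E : Type) where
  tail : E → V
  head : E → V

namespace MultiDigraph

variable {V E : Type} (G : MultiDigraph V E)

/-- A walk is a (possibly empty) list of arcs that chain head-to-tail. -/
def IsWalk (W : List E) : Prop := W.Chain' (fun a b => G.head a = G.tail b)

/-- The node sequence `v₀, v₁, …, v_ℓ` of a nonempty walk (empty for the empty walk). -/
def nodes : List E → List V
  | [] => []
  | e :: W => G.tail e :: (e :: W).map G.head

/-- The start node of a nonempty walk. -/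
def src (W : List E) : Option V := W.head?.map G.tail

/-- The end node of a nonempty walk. -/
def dst (W : List E) : Option V := W.getLast?.map G.head

/-- A path: a walk whose nodes are all distinct, except that the last node may
equal the first one (closed path). -/
def IsPath (W : List E) : Prop :=
  G.IsWalk W ∧ (G.nodes W).dropLast.Nodup ∧ (G.nodes W).tail.Nodup

/-- `P` is a forbidden path for the pair of arcs `(eR, eL)`: a non-empty path from
`tail eR` to `head eL` whose first arc differs from `eR` and last arc differs from `eL`. -/
def ForbiddenPath (eR eL : E) (P : List E) : Prop :=
  G.IsPath P ∧ P ≠ [] ∧ G.src P = some (G.tail eR) ∧ G.dst P = some (G.head eL) ∧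
    P.head? ≠ some eR ∧ P.getLast? ≠ some eL

/-- A walk `e₀ … e_ℓ` is an omnitig if for all `1 ≤ i ≤ j ≤ ℓ` there is no
forbidden path from `tail e_j` to `head e_{i-1}`. -/
def IsOmnitig (W : List E) : Prop :=
  G.IsWalk W ∧ ∀ i j : ℕ, (hi : 1 ≤ i) → (hij : i ≤ j) → (hj : j < W.length) →
    ¬ ∃ P, G.ForbiddenPath (W[j]'hj) (W[i-1]'(by omega)) P

/-- `u` reaches `v` by a (possibly empty) walk. -/
def Reaches (u v : V) : Prop :=
  u = v ∨ ∃ W, G.IsWalk W ∧ G.src W = some u ∧ G.dst W = some v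

def StronglyConnected : Prop := ∀ u v : V, G.Reaches u v

/-- In-degree of a node. -/
noncomputable def inDeg (v : V) : ℕ := Nat.card {e : E // G.head e = v}

/-- Out-degree of a node. -/
noncomputable def outDeg (v : V) : ℕ := Nat.card {e : E // G.tail e = v}

def JoinArc (e : E) : Prop := 1 < G.inDeg (G.head e)

def SplitArc (e : E) : Prop := 1 < G.outDeg (G.tail e)

def Bivalent (v : V) : Prop := 1 < G.inDeg v ∧ 1 < G.outDeg v

def JoinFree (W : List E) : Prop := ∀ e ∈ W, ¬ G.JoinArc e

def SplitFree (W : List E) : Prop := ∀ e ∈ W, ¬ G.SplitArc e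

/-- A closed walk covering every arc at least once. -/
def IsClosedArcCovering (W : List E) : Prop :=
  G.IsWalk W ∧ W ≠ [] ∧ G.src W = G.dst W ∧ ∀ e : E, e ∈ W

/-- `W'` occurs as a cyclic (wrap-around) subwalk of the closed walk `W`. -/
def IsCyclicSubwalk (W' W : List E) : Prop :=
  ∃ i : ℕ, ∀ k : ℕ, k < W'.length → W'[k]? = W[(i + k) % W.length]?

/-- The graph consists of a single closed path through all nodes and arcs. -/
def IsClosedPathGraph : Prop :=
  ∃ C : List E, G.IsPath C ∧ C ≠ [] ∧ G.src C = G.dst C ∧ C.Nodup ∧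
    (∀ e : E, e ∈ C) ∧ (∀ v : V, v ∈ G.nodes C)

/-- Compressed graph: no biunivocal nodes and no biunivocal arcs. -/
def Compressed : Prop :=
  (∀ v : V, 1 < G.inDeg v ∨ 1 < G.outDeg v) ∧
  (∀ e : E, G.JoinArc e ∨ G.SplitArc e)

/-- `u` reaches `v` by a (possibly empty) path avoiding the arc `f`. -/
def ReachesAvoid (f : E) (u v : V) : Prop :=
  u = v ∨ ∃ P, G.IsPath P ∧ f ∉ P ∧ G.src P = some u ∧ G.dst P = some v

/-- A maximal omnitig: an omnitig extendable neither to the left nor to the right. -/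
def IsMaximalOmnitig (W : List E) : Prop :=
  G.IsOmnitig W ∧ (∀ e : E, ¬ G.IsOmnitig (e :: W)) ∧ (∀ e : E, ¬ G.IsOmnitig (W ++ [e]))

/-- The reverse graph. -/
def rev : MultiDigraph V E := ⟨G.head, G.tail⟩

/-- Nodes reachable from `v` by a join-free path. -/
def Rplus (v : V) : Set V :=
  {u | u = v ∨ ∃ W, G.IsPath W ∧ G.JoinFree W ∧ G.src W = some v ∧ G.dst W = some u}

/-- Nodes reaching `v` by a split-free path. -/
def Rminus (v : V) : Set V :=
  {u | u = v ∨ ∃ W, G.IsPath W ∧ G.SplitFree W ∧ G.src W = some u ∧ G.dst W = some v}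

/-- The node set of the macronode centered at `v`. -/
def macronodeSet (v : V) : Set V := G.Rplus v ∪ G.Rminus v

/-- The graph obtained from `G` by contracting the arc `e`. -/
def contract [DecidableEq V] (e : E) : MultiDigraph V {a : E // a ≠ e} where
  tail a := if G.tail a.1 = G.head e then G.tail e else G.tail a.1
  head a := if G.head a.1 = G.head e then G.tail e else G.head a.1

end MultiDigraph


namespace MultiDigraph

variable {V E : Type} {G : MultiDigraph V E}

lemma IsWalk.adj {W : List E} (h : G.IsWalk W) {k : ℕ} (hk : k + 1 < W.length) :
    G.head (W[k]'(by omega)) = G.tail (W[k+1]'hk) := by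
  have := List.isChain_iff_getElem.mp h k (by omega)
  simpa using this

lemma nodes_length {W : List E} (h : W ≠ []) : (G.nodes W).length = W.length + 1 := by
  cases W with
  | nil => simp at h
  | cons e T => simp [nodes]

lemma nodes_tail (W : List E) : (G.nodes W).tail = W.map G.head := by
  cases W <;> simp [nodes]

lemma nodes_getElem_succ {W : List E} {k : ℕ} (hk : k < W.length)
    (h2 : k + 1 < (G.nodes W).length) :
    (G.nodes W)[k+1] = G.head (W[k]'hk) := by
  have hq : (G.nodes W)[k+1]? = some (G.head (W[k]'hk)) := by
    cases W with
    | nil => simp at hk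
    | cons e T =>
      rw [show G.nodes (e::T) = G.tail e :: (e::T).map G.head from rfl,
        List.getElem?_cons_succ, List.getElem?_map, List.getElem?_eq_getElem hk]
      rfl
  rw [List.getElem?_eq_getElem h2] at hq
  exact Option.some.inj hq

lemma nodes_getElem {W : List E} (hw : G.IsWalk W) {k : ℕ} (hk : k < W.length)
    (h2 : k < (G.nodes W).length) :
    (G.nodes W)[k] = G.tail (W[k]'hk) := by
  cases k with
  | zero =>
    cases W with
    | nil => simp at hk
    | cons e T => simp [nodes]
  | succ m =>
    have h1 : (G.nodes W)[m+1] = G.head (W[m]'(by omega)) :=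
      nodes_getElem_succ (by omega) h2
    rw [h1, hw.adj hk]

lemma nodes_dropLast {W : List E} (hw : G.IsWalk W) :
    (G.nodes W).dropLast = W.map G.tail := by
  rcases eq_or_ne W [] with rfl | h
  · simp [nodes]
  · apply List.ext_getElem
    · simp [nodes_length h]
    · intro k h1 h2
      rw [List.getElem_dropLast, List.getElem_map,
        nodes_getElem hw (by simpa using h2)]

lemma isPath_iff {W : List E} :
    G.IsPath W ↔ G.IsWalk W ∧ (W.map G.tail).Nodup ∧ (W.map G.head).Nodup := by
  constructor
  · rintro ⟨hw, h1, h2⟩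
    exact ⟨hw, by rwa [nodes_dropLast hw] at h1, by rwa [nodes_tail] at h2⟩
  · rintro ⟨hw, h1, h2⟩
    exact ⟨hw, by rwa [nodes_dropLast hw], by rwa [nodes_tail]⟩

lemma src_eq {W : List E} (h : W ≠ []) :
    G.src W = some (G.tail (W[0]'(List.length_pos_iff.mpr h))) := by
  rw [src, List.head?_eq_getElem?, List.getElem?_eq_getElem (List.length_pos_iff.mpr h)]
  rfl

lemma dst_eq {W : List E} (h : W ≠ []) :
    G.dst W = some (G.head (W[W.length - 1]'(by
      have := List.length_pos_iff.mpr h; omega))) := by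
  rw [dst, List.getLast?_eq_getElem?, List.getElem?_eq_getElem (by
      have := List.length_pos_iff.mpr h; omega)]
  rfl

lemma nodes_getLast? {W : List E} (h : W ≠ []) :
    (G.nodes W).getLast? = G.dst W := by
  have hpos := List.length_pos_iff.mpr h
  rw [List.getLast?_eq_getElem?, nodes_length h, dst_eq h]
  rw [List.getElem?_eq_getElem (by rw [nodes_length h]; omega)]
  congr 1
  have h3 : (G.nodes W)[(W.length - 1)+1]'(by rw [nodes_length h]; omega)
      = G.head (W[W.length-1]'(by omega)) :=
    nodes_getElem_succ (by omega) (by rw [nodes_length h]; omega)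
  convert h3 using 2
  omega

lemma nodes_head? {W : List E} (h : W ≠ []) : (G.nodes W).head? = G.src W := by
  cases W with
  | nil => simp at h
  | cons e T => simp [nodes, src]

lemma IsWalk.drop {W : List E} (h : G.IsWalk W) (t : ℕ) : G.IsWalk (W.drop t) :=
  (List.isChain_append.mp (by rw [List.take_append_drop]; exact h)).2.1

lemma IsWalk.take {W : List E} (h : G.IsWalk W) (t : ℕ) : G.IsWalk (W.take t) :=
  (List.isChain_append.mp (by rw [List.take_append_drop]; exact h)).1

lemma IsPath.drop {W : List E} (h : G.IsPath W) (t : ℕ) : G.IsPath (W.drop t) := by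
  rw [isPath_iff] at h ⊢
  refine ⟨h.1.drop t, ?_, ?_⟩
  · rw [List.map_drop]; exact h.2.1.sublist (List.drop_sublist _ _)
  · rw [List.map_drop]; exact h.2.2.sublist (List.drop_sublist _ _)

lemma shorten {u v : V} (huv : u ≠ v) :
    ∀ n (W : List E), W.length ≤ n → G.IsWalk W → W ≠ [] →
      G.src W = some u → G.dst W = some v →
      ∃ P : List E, G.IsWalk P ∧ P ≠ [] ∧ G.src P = some u ∧ G.dst P = some v ∧
        (G.nodes P).Nodup := by
  intro n
  induction n with
  | zero =>
    intro W hlen _ hne _ _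
    exact absurd (List.length_eq_zero_iff.mp (Nat.le_zero.mp hlen)) hne
  | succ n ih =>
    intro W hlen hw hne hsrc hdst
    by_cases hnd : (G.nodes W).Nodup
    · exact ⟨W, hw, hne, hsrc, hdst, hnd⟩
    rw [List.nodup_iff_injective_get, Function.Injective] at hnd
    push_neg at hnd
    obtain ⟨a, b, heq0, hne0⟩ := hnd
    have hpos : 0 < W.length := List.length_pos_iff.mpr hne
    obtain ⟨p, q, hpq, hqlt, heq⟩ :
        ∃ (p q : ℕ) (hpq : p < q) (hqlt : q < (G.nodes W).length),
          (G.nodes W)[p]'(by omega) = (G.nodes W)[q]'hqlt := by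
      rcases lt_or_gt_of_ne (fun h => hne0 (Fin.ext h)) with h | h
      · exact ⟨a, b, h, b.isLt, by simpa [List.get_eq_getElem] using heq0⟩
      · exact ⟨b, a, h, a.isLt, by simpa [List.get_eq_getElem] using heq0.symm⟩
    rw [nodes_length hne] at hqlt
    have hqle : q ≤ W.length := by omega
    have hu0 : G.tail (W[0]'hpos) = u := by
      rw [src_eq hne] at hsrc; exact Option.some.inj hsrc
    have hvL : G.head (W[W.length - 1]'(by omega)) = v := by
      rw [dst_eq hne] at hdst; exact Option.some.inj hdst
    have hnodesk : ∀ k (hk : k < W.length),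
        (G.nodes W)[k]'(by rw [nodes_length hne]; omega) = G.tail (W[k]'hk) :=
      fun k hk => nodes_getElem hw hk _
    have hnodesk' : ∀ k (hk0 : 0 < k) (hk : k ≤ W.length),
        (G.nodes W)[k]'(by rw [nodes_length hne]; omega) = G.head (W[k-1]'(by omega)) := by
      intro k hk0 hk
      obtain ⟨m, rfl⟩ : ∃ m, k = m + 1 := ⟨k-1, by omega⟩
      simpa using nodes_getElem_succ (W := W) (k := m) (by omega)
        (by rw [nodes_length hne]; omega)
    have hkey : ¬(p = 0 ∧ q = W.length) := by
      rintro ⟨rfl, rfl⟩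
      apply huv
      have h1 : (G.nodes W)[0]'(by rw [nodes_length hne]; omega) = u := by
        rw [hnodesk 0 hpos]; exact hu0
      have h2 : (G.nodes W)[W.length]'(by rw [nodes_length hne]; omega) = v := by
        rw [hnodesk' W.length hpos le_rfl]; exact hvL
      rw [h1, h2] at heq
      exact heq
    set W' : List E := W.take p ++ W.drop q with hW'
    have hlen' : W'.length = p + (W.length - q) := by
      simp [hW', List.length_take, List.length_drop]
      omega
    have hW'ne : W' ≠ [] := by
      intro hcon
      have hc := congrArg List.length hcon
      rw [hlen'] at hc
      simp at hc
      exact hkey ⟨hc.1, by omega⟩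
    have htake_last : 0 < p → (W.take p).getLast? = some (W[p-1]'(by omega)) := by
      intro hp
      rw [List.getLast?_eq_getElem?,
        show (W.take p).length = p by simp [List.length_take]; omega,
        List.getElem?_take, if_pos (by omega), List.getElem?_eq_getElem (by omega)]
    have hdrop_head : ∀ hq : q < W.length, (W.drop q).head? = some (W[q]'(by omega)) := by
      intro hq
      rw [List.head?_eq_getElem?, List.getElem?_drop,
        show q + 0 = q from rfl, List.getElem?_eq_getElem (by omega)]
    have hwalk' : G.IsWalk W' := by
      rw [hW', IsWalk, List.Chain', List.isChain_append]
      refine ⟨hw.take p, hw.drop q, ?_⟩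
      intro x hx y hy
      rcases Nat.eq_zero_or_pos p with rfl | hp
      · simp at hx
      rcases Nat.lt_or_ge q W.length with hq | hq
      · rw [htake_last hp] at hx
        rw [hdrop_head hq] at hy
        simp only [Option.mem_def, Option.some.injEq] at hx hy
        rw [← hx, ← hy, ← hnodesk' p hp (by omega), ← hnodesk q hq]
        exact heq
      · rw [List.drop_eq_nil_of_le hq] at hy
        simp at hy
    have hsrc' : G.src W' = some u := by
      rcases Nat.eq_zero_or_pos p with rfl | hp
      · have hq : q < W.length := by
          rcases Nat.lt_or_ge q W.length with h | h
          · exact h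
          · exact absurd ⟨rfl, by omega⟩ hkey
        rw [hW']
        simp only [List.take_zero, List.nil_append]
        rw [src, hdrop_head hq]
        simp only [Option.map_some]
        congr 1
        rw [← hnodesk q hq, ← heq, hnodesk 0 hpos]
        exact hu0
      · rw [hW', src, List.head?_append]
        have h0 : (W.take p).head? = some (W[0]'hpos) := by
          rw [List.head?_eq_getElem?, List.getElem?_take, if_pos hp,
            List.getElem?_eq_getElem hpos]
        rw [h0]
        simp [hu0]
    have hdst' : G.dst W' = some v := by
      rcases Nat.lt_or_ge q W.length with hq | hq
      · have hd : (W.drop q).getLast? = some (W[W.length - 1]'(by omega)) := by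
          rw [List.getLast?_eq_getElem?, List.length_drop, List.getElem?_drop,
            show q + (W.length - q - 1) = W.length - 1 by omega]
          exact List.getElem?_eq_getElem (by omega)
        have hdn : W.drop q ≠ [] := by
          intro hcon
          have := congrArg List.length hcon
          simp at this
          omega
        rw [hW', dst, List.getLast?_append_of_ne_nil _ hdn, hd]
        simp [hvL]
      · have hq' : q = W.length := by omega
        subst hq'
        have hp : 0 < p := by
          rcases Nat.eq_zero_or_pos p with rfl | hp
          · exact absurd ⟨rfl, rfl⟩ hkey
          · exact hp
        rw [hW', List.drop_eq_nil_of_le hq, List.append_nil, dst, htake_last hp]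
        simp only [Option.map_some]
        congr 1
        rw [← hnodesk' p hp (by omega), heq, hnodesk' W.length hpos le_rfl]
        exact hvL
    have hlen'' : W'.length ≤ n := by rw [hlen']; omega
    obtain ⟨P, h1, h2, h3, h4, h5⟩ := ih W' hlen'' hwalk' hW'ne hsrc' hdst'
    exact ⟨P, h1, h2, h3, h4, h5⟩

lemma reaches_path {u v : V} (h : G.Reaches u v) (huv : u ≠ v) :
    ∃ P, G.IsWalk P ∧ P ≠ [] ∧ G.src P = some u ∧ G.dst P = some v ∧
      (G.nodes P).Nodup := by
  rcases h with rfl | ⟨W, hw, hs, hd⟩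
  · exact absurd rfl huv
  · have hne : W ≠ [] := by rintro rfl; simp [src] at hs
    exact shorten huv W.length W le_rfl hw hne hs hd

lemma getLast_not_mem_dropLast {α : Type*} {l : List α} (h : l.Nodup) (hne : l ≠ []) :
    l.getLast hne ∉ l.dropLast := by
  intro hm
  have h2 := h
  rw [← List.dropLast_append_getLast hne, List.nodup_append] at h2
  exact h2.2.2 _ hm _ (by simp) rfl

lemma head_not_mem_tail {α : Type*} {l : List α} (h : l.Nodup) (hne : l ≠ []) :
    l.head hne ∉ l.tail := by
  cases l with
  | nil => simp at hne
  | cons a t =>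
    rw [List.nodup_cons] at h
    simpa using h.1

lemma exists_closed_path_last (hG : G.StronglyConnected) {u : V} (g : E)
    (hg : G.head g = u) :
    ∃ R, G.IsPath R ∧ R ≠ [] ∧ G.src R = some u ∧ G.dst R = some u ∧
      R.getLast? = some g := by
  by_cases htg : G.tail g = u
  · refine ⟨[g], ?_, by simp, ?_, ?_, rfl⟩
    · rw [isPath_iff]
      exact ⟨List.isChain_singleton g, by simp, by simp⟩
    · simp [src, htg]
    · simp [dst, hg]
  · obtain ⟨P, hw, hne, hs, hd, hnd⟩ :=
      reaches_path (hG u (G.tail g)) (fun h => htg h.symm)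
    have hposP : 0 < P.length := List.length_pos_iff.mpr hne
    have hnodesne : G.nodes P ≠ [] := by
      intro hcon
      have := congrArg List.length hcon
      rw [nodes_length hne] at this
      simp at this
    -- last node of P is tail g, head node is u
    have hlastnode : (G.nodes P).getLast hnodesne = G.tail g := by
      have h1 := nodes_getLast? (G := G) hne
      rw [hd, List.getLast?_eq_getLast hnodesne] at h1
      exact Option.some.inj h1
    have hheadnode : (G.nodes P).head hnodesne = u := by
      have h1 := nodes_head? (G := G) hne
      rw [hs, List.head?_eq_head hnodesne] at h1
      exact Option.some.inj h1
    have hPlast : ∃ pl, P.getLast? = some pl ∧ G.head pl = G.tail g := by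
      rw [dst] at hd
      obtain ⟨pl, h1, h2⟩ := Option.map_eq_some_iff.mp hd
      exact ⟨pl, h1, h2⟩
    refine ⟨P ++ [g], ?_, by simp, ?_, ?_, List.getLast?_concat⟩
    · rw [isPath_iff]
      refine ⟨?_, ?_, ?_⟩
      · rw [IsWalk, List.Chain', List.isChain_append]
        refine ⟨hw, List.isChain_singleton g, ?_⟩
        intro x hx y hy
        obtain ⟨pl, h1, h2⟩ := hPlast
        rw [h1] at hx
        simp only [Option.mem_def, Option.some.injEq] at hx
        simp only [List.head?_cons, Option.mem_def, Option.some.injEq] at hy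
        rw [← hx, ← hy] at *
        exact h2
      · rw [List.map_append]
        simp only [List.map_cons, List.map_nil]
        rw [List.nodup_append]
        refine ⟨by rw [← nodes_dropLast hw]; exact hnd.sublist (List.dropLast_sublist _), by simp, ?_⟩
        intro x hx
        simp only [List.mem_singleton]
        intro _ hb heq
        subst hb heq
        rw [← nodes_dropLast hw, ← hlastnode] at hx
        exact getLast_not_mem_dropLast hnd hnodesne hx
      · rw [List.map_append]
        simp only [List.map_cons, List.map_nil]
        rw [List.nodup_append]
        refine ⟨by rw [← nodes_tail]; exact hnd.sublist (List.tail_sublist _), by simp, ?_⟩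
        intro x hx
        simp only [List.mem_singleton]
        intro _ hb hexq
        subst hb hexq
        rw [← nodes_tail, hg, ← hheadnode] at hx
        exact head_not_mem_tail hnd hnodesne hx
    · rw [src, List.head?_append]
      rw [src] at hs
      cases hh : P.head? with
      | none => rw [hh] at hs; simp at hs
      | some p0 =>
        rw [hh] at hs
        rw [show (some p0).or [g].head? = some p0 from rfl]
        exact hs
    · rw [dst, List.getLast?_concat]
      simp [hg]

lemma exists_closed_path_head (hG : G.StronglyConnected) {u : V} (f : E)
    (hf : G.tail f = u) :
    ∃ Q, G.IsPath Q ∧ Q ≠ [] ∧ G.src Q = some u ∧ G.dst Q = some u ∧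
      Q.head? = some f := by
  by_cases hhf : G.head f = u
  · refine ⟨[f], ?_, by simp, ?_, ?_, rfl⟩
    · rw [isPath_iff]
      exact ⟨List.isChain_singleton f, by simp, by simp⟩
    · simp [src, hf]
    · simp [dst, hhf]
  · obtain ⟨P, hw, hne, hs, hd, hnd⟩ :=
      reaches_path (hG (G.head f) u) hhf
    have hposP : 0 < P.length := List.length_pos_iff.mpr hne
    have hnodesne : G.nodes P ≠ [] := by
      intro hcon
      have := congrArg List.length hcon
      rw [nodes_length hne] at this
      simp at this
    have hlastnode : (G.nodes P).getLast hnodesne = u := by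
      have h1 := nodes_getLast? (G := G) hne
      rw [hd, List.getLast?_eq_getLast hnodesne] at h1
      exact Option.some.inj h1
    have hheadnode : (G.nodes P).head hnodesne = G.head f := by
      have h1 := nodes_head? (G := G) hne
      rw [hs, List.head?_eq_head hnodesne] at h1
      exact Option.some.inj h1
    have hPhead : ∃ p0, P.head? = some p0 ∧ G.tail p0 = G.head f := by
      rw [src] at hs
      obtain ⟨p0, h1, h2⟩ := Option.map_eq_some_iff.mp hs
      exact ⟨p0, h1, h2⟩
    refine ⟨f :: P, ?_, by simp, ?_, ?_, rfl⟩
    · rw [isPath_iff]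
      refine ⟨?_, ?_, ?_⟩
      · rw [IsWalk, List.Chain', List.isChain_cons]
        refine ⟨?_, hw⟩
        intro y hy
        obtain ⟨p0, h1, h2⟩ := hPhead
        rw [h1] at hy
        simp only [Option.mem_def, Option.some.injEq] at hy
        rw [← hy] at *
        exact h2.symm
      · simp only [List.map_cons]
        rw [List.nodup_cons]
        refine ⟨?_, by rw [← nodes_dropLast hw]; exact hnd.sublist (List.dropLast_sublist _)⟩
        intro hx
        rw [← nodes_dropLast hw, hf, ← hlastnode] at hx
        exact getLast_not_mem_dropLast hnd hnodesne hx
      · simp only [List.map_cons]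
        rw [List.nodup_cons]
        refine ⟨?_, by rw [← nodes_tail]; exact hnd.sublist (List.tail_sublist _)⟩
        intro hx
        rw [← nodes_tail, ← hheadnode] at hx
        exact head_not_mem_tail hnd hnodesne hx
    · simp [src, hf]
    · have hgl : (f :: P).getLast? = P.getLast? := by
        cases P with
        | nil => exact absurd rfl hne
        | cons b t => exact List.getLast?_cons_cons
      rw [dst, hgl]
      exact hd

lemma gelem_congr {α : Type*} {l : List α} {m k : ℕ} (h : m = k) {hm : m < l.length} :
    l[m]'hm = l[k]'(by omega) := by subst h; rfl

lemma nat_exists_min {P : ℕ → Prop} (h : ∃ k, P k) :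
    ∃ k, P k ∧ ∀ m, m < k → ¬ P m := by
  classical
  exact ⟨Nat.find h, Nat.find_spec h, fun m hm => Nat.find_min h hm⟩

lemma two_le_count {α : Type*} [DecidableEq α] :
    ∀ {l : List α} {a : α}, 2 ≤ l.count a →
      ∃ (i j : ℕ) (hij : i < j) (hj : j < l.length),
        l[i]'(by omega) = a ∧ l[j]'hj = a := by
  intro l
  induction l with
  | nil => intro a h; simp at h
  | cons b t ih =>
    intro a h
    by_cases hb : b = a
    · subst hb
      have h1 : 1 ≤ t.count b := by
        rw [List.count_cons_self] at h
        omega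
      have hmem : b ∈ t := List.count_pos_iff.mp (by omega)
      obtain ⟨m, hm, hma⟩ := List.mem_iff_getElem.mp hmem
      exact ⟨0, m+1, by omega, by simpa using hm, by simp, by simpa using hma⟩
    · have h2 : 2 ≤ t.count a := by
        rwa [List.count_cons_of_ne hb] at h
      obtain ⟨i, j, hij, hj, e1, e2⟩ := ih h2
      exact ⟨i+1, j+1, by omega, by simpa using hj, by simpa using e1,
        by simpa using e2⟩

lemma matching {W : List E} (hW : G.IsOmnitig W) {u : V} {i j : ℕ}
    (hij : i < j) (hjn : j + 1 < W.length)
    (hWi : G.head (W[i]'(by omega)) = u) (hWj : G.head (W[j]'(by omega)) = u)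
    (hbet : ∀ k (hk : k < W.length), i < k → k < j → G.head (W[k]'hk) ≠ u)
    {R : List E} {g : E} (hR : G.IsPath R) (hRne : R ≠ [])
    (hsrc : G.src R = some u) (hdst : G.dst R = some u)
    (hlast : R.getLast? = some g) (hgi : g ≠ W[i]'(by omega)) :
    g = W[j]'(by omega) ∧ R.head? = some (W[i+1]'(by omega)) := by
  classical
  have hwalkR : G.IsWalk R := hR.1
  have hwalkW : G.IsWalk W := hW.1
  have hs1 : 1 ≤ R.length := List.length_pos_iff.mpr hRne
  have hhead_nodup : (R.map G.head).Nodup := (isPath_iff.mp hR).2.2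
  have hlastg : R[R.length-1]? = some g := by
    rw [← List.getLast?_eq_getElem?]; exact hlast
  have hlastg' : R[R.length-1]'(by omega) = g := by
    rw [List.getElem?_eq_getElem (by omega)] at hlastg
    exact Option.some.inj hlastg
  have hgu : G.head g = u := by
    rw [dst, hlast] at hdst
    simpa using hdst
  have hinternal : ∀ m (hm : m < R.length - 1), G.head (R[m]'(by omega)) ≠ u := by
    intro m hm hcon
    have h2 : (R.map G.head)[m]'(by simp; omega) = (R.map G.head)[R.length-1]'(by simp; omega) := by
      rw [List.getElem_map, List.getElem_map, hcon, hlastg', hgu]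
    have h3 := (hhead_nodup.getElem_inj_iff).mp h2
    omega
  have hex : ∃ k, ¬(k < R.length ∧ i+1+k < W.length ∧ R[k]? = W[i+1+k]?) :=
    ⟨R.length, fun h => absurd h.1 (lt_irrefl _)⟩
  set t := Nat.find hex with ht
  have hDt := Nat.find_spec hex
  have hts : t ≤ R.length := Nat.find_le (fun h => absurd h.1 (lt_irrefl _))
  have hmatch : ∀ m, m < t → m < R.length ∧ i+1+m < W.length ∧ R[m]? = W[i+1+m]? :=
    fun m hm => not_not.mp (Nat.find_min hex hm)
  have hmatch' : ∀ m (hm : m < t),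
      R[m]'(hmatch m hm).1 = W[i+1+m]'(hmatch m hm).2.1 := by
    intro m hm
    have h1 := (hmatch m hm).2.2
    have h2 : (some (R[m]'(hmatch m hm).1) : Option E)
        = some (W[i+1+m]'(hmatch m hm).2.1) := by
      rw [← List.getElem?_eq_getElem, ← List.getElem?_eq_getElem]
      exact h1
    exact Option.some.inj h2
  by_cases h1 : t = R.length
  · -- R fully matches W starting at i+1
    have hlastm : R.length - 1 < t := by omega
    have hin : i + 1 + (R.length - 1) < W.length := (hmatch _ hlastm).2.1
    have hgW : g = W[i+R.length]'(by omega) := by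
      have h2 := hmatch' (R.length - 1) hlastm
      rw [hlastg'] at h2
      rw [h2]
      congr 1
      omega
    have hheadis : G.head (W[i+R.length]'(by omega)) = u := by rw [← hgW]; exact hgu
    rcases lt_trichotomy (i + R.length) j with hlt | heqj | hgt
    · exact absurd hheadis (hbet (i+R.length) (by omega) (by omega) hlt)
    · constructor
      · rw [hgW]
        exact gelem_congr (by omega)
      · have h0 := hmatch' 0 (by omega)
        rw [List.head?_eq_getElem?, List.getElem?_eq_getElem (by omega), h0]
    · exfalso
      have hm : j - i - 1 < t := by omega
      have h2 := hmatch' (j-i-1) hm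
      have h3 : i + 1 + (j-i-1) = j := by omega
      have h4 : G.head (R[j-i-1]'(hmatch _ hm).1) = u := by
        rw [h2]
        rw [gelem_congr (l := W) (show i+1+(j-i-1) = j by omega)]
        exact hWj
      exact hinternal (j-i-1) (by omega) h4
  · by_cases h2 : i + 1 + t < W.length
    · -- divergence: construct a forbidden path
      exfalso
      have hts' : t < R.length := by omega
      have hneq : R[t]? ≠ W[i+1+t]? := by
        intro hcon
        exact hDt ⟨hts', h2, hcon⟩
      have hnf := hW.2 (i+1) (i+1+t) (by omega) (by omega) h2
      simp only [Nat.add_sub_cancel] at hnf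
      apply hnf
      refine ⟨R.drop t, hR.drop t, ?_, ?_, ?_, ?_, ?_⟩
      · intro hcon
        have := congrArg List.length hcon
        simp at this
        omega
      · -- src
        rw [src, List.head?_eq_getElem?, List.getElem?_drop,
          Nat.add_zero t, List.getElem?_eq_getElem hts']
        simp only [Option.map_some]
        congr 1
        rcases Nat.eq_zero_or_pos t with ht0 | ht0
        · have e1 : G.tail (R[t]'hts') = u := by
            rw [gelem_congr (l := R) ht0]
            rw [src_eq hRne] at hsrc
            exact Option.some.inj hsrc
          have hadj := hwalkW.adj (k := i) (by omega)
          rw [hWi] at hadj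
          rw [e1, gelem_congr (l := W) (show i+1+t = i+1 by omega)]
          exact hadj
        · obtain ⟨m, hm⟩ : ∃ m, t = m + 1 := ⟨t-1, by omega⟩
          have hadjR := hwalkR.adj (k := m) (by omega)
          have hadjW := hwalkW.adj (k := i+1+m) (by omega)
          have e2 := hmatch' m (by omega)
          rw [gelem_congr (l := R) hm, gelem_congr (l := W)
            (show i+1+t = (i+1+m)+1 by omega), ← hadjR, ← hadjW, e2]
      · -- dst
        have hgl : (R.drop t).getLast? = some g := by
          rw [List.getLast?_eq_getElem?, List.length_drop, List.getElem?_drop,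
            show t + (R.length - t - 1) = R.length - 1 by omega]
          exact hlastg
        rw [dst, hgl]
        simp only [Option.map_some]
        rw [hgu, hWi]
      · -- head? ≠
        rw [List.head?_eq_getElem?, List.getElem?_drop, Nat.add_zero t]
        intro hcon
        apply hneq
        rw [hcon, List.getElem?_eq_getElem h2]
      · -- getLast? ≠
        have hgl : (R.drop t).getLast? = some g := by
          rw [List.getLast?_eq_getElem?, List.length_drop, List.getElem?_drop,
            show t + (R.length - t - 1) = R.length - 1 by omega]
          exact hlastg
        rw [hgl]
        intro hcon
        exact hgi (Option.some.inj hcon)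
    · -- boundary overflow: impossible since j is matched
      exfalso
      have hm : j - i - 1 < t := by omega
      have h3 := hmatch' (j-i-1) hm
      have h4 : G.head (R[j-i-1]'(hmatch _ hm).1) = u := by
        rw [h3]
        rw [gelem_congr (l := W) (show i+1+(j-i-1) = j by omega)]
        exact hWj
      exact hinternal (j-i-1) (by omega) h4

end MultiDigraph

/-- No omnitig contains a bivalent node twice as an internal node. -/
theorem stmt_12 {V E : Type} [Fintype V] [Fintype E] [DecidableEq V]
    (G : MultiDigraph V E) (hG : G.StronglyConnected)
    (W : List E) (hW : G.IsOmnitig W) (u : V) (hu : G.Bivalent u) :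
    (((G.nodes W).drop 1).dropLast).count u ≤ 1 := by
  classical
  by_contra hcount
  push_neg at hcount
  rcases eq_or_ne W [] with rfl | hWne
  · simp [MultiDigraph.nodes] at hcount
  have hint : ((G.nodes W).drop 1).dropLast = (W.dropLast).map G.head := by
    cases W with
    | nil => exact absurd rfl hWne
    | cons e T =>
      rw [show G.nodes (e::T) = G.tail e :: (e::T).map G.head from rfl]
      rw [List.map_dropLast]
      rfl
  rw [hint] at hcount
  have hcount2 : 2 ≤ ((W.dropLast).map G.head).count u := hcount
  obtain ⟨i, j0, hij0, hj0, hi0, hj0'⟩ := MultiDigraph.two_le_count hcount2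
  rw [List.length_map, List.length_dropLast] at hj0
  rw [List.getElem_map, List.getElem_dropLast] at hi0 hj0'
  have hexj : ∃ k, i < k ∧ ∃ hk : k < W.length - 1,
      G.head (W[k]'(by omega)) = u := ⟨j0, hij0, hj0, hj0'⟩
  obtain ⟨j, ⟨hij, hjlt, hWj⟩, hjmin⟩ := MultiDigraph.nat_exists_min hexj
  have hjn : j + 1 < W.length := by omega
  have hWi : G.head (W[i]'(by omega)) = u := hi0
  have hbet : ∀ k (hk : k < W.length), i < k → k < j → G.head (W[k]'hk) ≠ u := by
    intro k hk h1k h2k hcon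
    exact hjmin k h2k ⟨h1k, by omega, hcon⟩
  obtain ⟨g, hgu, hgne⟩ : ∃ g : E, G.head g = u ∧ g ≠ W[i]'(by omega) := by
    have h1 : 1 < Nat.card {e : E // G.head e = u} := hu.1
    rw [Nat.card_eq_fintype_card, Fintype.one_lt_card_iff_nontrivial] at h1
    obtain ⟨⟨g₁, hg₁⟩, ⟨g₂, hg₂⟩, hneq⟩ := h1
    by_cases hc : g₁ = W[i]'(by omega)
    · refine ⟨g₂, hg₂, fun hcon => hneq ?_⟩
      apply Subtype.ext
      simp [hc, hcon]
    · exact ⟨g₁, hg₁, hc⟩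
  obtain ⟨R, hRp, hRne, hRs, hRd, hRl⟩ :=
    MultiDigraph.exists_closed_path_last hG g hgu
  obtain ⟨hgj, hR0⟩ :=
    MultiDigraph.matching hW hij hjn hWi hWj hbet hRp hRne hRs hRd hRl hgne
  have hWij : W[j]'(by omega) ≠ W[i]'(by omega) := by rw [← hgj]; exact hgne
  obtain ⟨f, hfu, hfne⟩ : ∃ f : E, G.tail f = u ∧ f ≠ W[j+1]'(by omega) := by
    have h1 : 1 < Nat.card {e : E // G.tail e = u} := hu.2
    rw [Nat.card_eq_fintype_card, Fintype.one_lt_card_iff_nontrivial] at h1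
    obtain ⟨⟨f₁, hf₁⟩, ⟨f₂, hf₂⟩, hneq⟩ := h1
    by_cases hc : f₁ = W[j+1]'(by omega)
    · refine ⟨f₂, hf₂, fun hcon => hneq ?_⟩
      apply Subtype.ext
      simp [hc, hcon]
    · exact ⟨f₁, hf₁, hc⟩
  obtain ⟨Q, hQp, hQne, hQs, hQd, hQh⟩ :=
    MultiDigraph.exists_closed_path_head hG f hfu
  obtain ⟨a, hQl⟩ : ∃ a, Q.getLast? = some a :=
    ⟨Q.getLast hQne, List.getLast?_eq_getLast _⟩
  have hadj : u = G.tail (W[j+1]'(by omega)) := by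
    have h := MultiDigraph.IsWalk.adj hW.1 (k := j) (by omega)
    rw [hWj] at h
    exact h
  have hsrcQ : G.src Q = some (G.tail (W[j+1]'(by omega))) := by
    rw [hQs, ← hadj]
  have ha1 : a = W[i]'(by omega) := by
    by_contra hcon
    have hnf := hW.2 (i+1) (j+1) (by omega) (by omega) (by omega)
    simp only [Nat.add_sub_cancel] at hnf
    apply hnf
    refine ⟨Q, hQp, hQne, hsrcQ, ?_, ?_, ?_⟩
    · rw [hQd, hWi]
    · rw [hQh]
      intro h
      exact hfne (Option.some.inj h)
    · rw [hQl]
      intro h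
      exact hcon (Option.some.inj h)
  have ha2 : a = W[j]'(by omega) := by
    by_contra hcon
    have hnf := hW.2 (j+1) (j+1) (by omega) (by omega) (by omega)
    simp only [Nat.add_sub_cancel] at hnf
    apply hnf
    refine ⟨Q, hQp, hQne, hsrcQ, ?_, ?_, ?_⟩
    · rw [hQd, hWj]
    · rw [hQh]
      intro h
      exact hfne (Option.some.inj h)
    · rw [hQl]
      intro h
      exact hcon (Option.some.inj h)
  exact hWij (ha2.symm.trans ha1)
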